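/- Let k ≥ 2 be even and n ≥ 2k−1. Then the minimum cardinality of a set T of k-cycles in S_n such that T generates S_n is exactly ⌈(n−1)/(k−1)⌉. -/

import Mathlib

set_option linter.unusedSectionVars false


open Equiv Equiv.Perm Subgroup MulAction

variable {α : Type*} [Fintype α] [DecidableEq α]

noncomputable def nOrb (H : Subgroup (Perm α)) : ℕ :=
  Nat.card (Quotient (MulAction.orbitRel H α))

lemma key_invariance (H : Subgroup (Perm α)) (g : Perm α) (a : α)
    (hdisj : ∀ x ∈ MulAction.orbit H a, g x = x) :
    MulAction.orbit (closure (insert g (H : Set (Perm α)))) a ⊆ MulAction.orbit H a := by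
  rintro _ ⟨⟨σ, hσ⟩, rfl⟩
  have main : ∀ σ ∈ closure (insert g (H : Set (Perm α))),
      (∀ y ∈ MulAction.orbit H a, σ y ∈ MulAction.orbit H a ∧ σ⁻¹ y ∈ MulAction.orbit H a) := by
    intro σ hσ
    induction hσ using closure_induction with
    | mem τ hτ =>
      rcases hτ with rfl | hτ
      · intro y hy
        constructor
        · rw [hdisj y hy]; exact hy
        · have := hdisj y hy
          have : τ⁻¹ y = y := by
            conv_lhs => rw [← this]
            simp
          rw [this]; exact hy
      · intro y hy
        rcases hy with ⟨h', rfl⟩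
        constructor
        · exact ⟨⟨τ, hτ⟩ * h', rfl⟩
        · refine ⟨⟨τ, hτ⟩⁻¹ * h', ?_⟩
          show (⟨τ, hτ⟩⁻¹ * h') • a = τ⁻¹ (h' • a)
          rw [mul_smul]
          rfl
    | one => simp
    | mul σ τ hσm hτm ihσ ihτ =>
      intro y hy
      refine ⟨(ihσ _ ((ihτ y hy).1)).1, ?_⟩
      have := (ihτ _ ((ihσ y hy).2)).2
      simpa [mul_smul] using this
    | inv σ hσm ihσ =>
      intro y hy
      exact ⟨(ihσ y hy).2, by simpa using (ihσ y hy).1⟩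
  have := (main σ hσ a (MulAction.mem_orbit_self a)).1
  simpa using this

lemma step_lemma (H : Subgroup (Perm α)) (g : Perm α) (hg : g.support.Nonempty) :
    nOrb H ≤ nOrb (closure (insert g (H : Set (Perm α)))) + (g.support.card - 1) := by
  classical
  set K := closure (insert g (H : Set (Perm α))) with hK
  have hHK : H ≤ K := le_trans (le_of_eq (closure_eq H).symm)
    (closure_mono (Set.subset_insert _ _))
  letI : Setoid α := MulAction.orbitRel H α
  have hsound : ∀ a b : α, a ∈ MulAction.orbit H b → a ∈ MulAction.orbit K b := by
    rintro a b ⟨⟨h, hh⟩, rfl⟩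
    exact ⟨⟨h, hHK hh⟩, rfl⟩
  set QH := Quotient (MulAction.orbitRel H α)
  set QK := Quotient (MulAction.orbitRel K α)
  have hrel : ∀ a b : α, (MulAction.orbitRel H α).r a b ↔ a ∈ MulAction.orbit H b := by
    intro a b; rfl
  have hrelK : ∀ a b : α, (MulAction.orbitRel K α).r a b ↔ a ∈ MulAction.orbit K b := by
    intro a b; rfl
  let φ : QH → QK := Quotient.map' (fun a => a) (by
    intro a b hab
    exact hsound a b hab)
  -- key: if the H-orbit of a misses the support, K-orbit equals H-orbit
  have hkey : ∀ a : α, (¬ ∃ x ∈ g.support, (⟦x⟧ : QH) = ⟦a⟧) →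
      MulAction.orbit K a ⊆ MulAction.orbit H a := by
    intro a ha
    apply key_invariance
    intro y hy
    rw [← Equiv.Perm.notMem_support]
    intro hmem
    exact ha ⟨y, hmem, Quotient.sound ((hrel y a).mpr hy)⟩
  let ψ : QH → (↥g.support ⊕ {q : QK // ∀ x ∈ g.support, (⟦x⟧ : QK) ≠ q}) := fun q =>
    if h : ∃ x ∈ g.support, (⟦x⟧ : QH) = q then Sum.inl ⟨h.choose, h.choose_spec.1⟩
    else Sum.inr ⟨φ q, by
      obtain ⟨a, rfl⟩ := Quotient.exists_rep q
      intro x hx hxq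
      have : x ∈ MulAction.orbit K a := (hrelK x a).mp (Quotient.exact hxq)
      have : x ∈ MulAction.orbit H a := hkey a h this
      exact h ⟨x, hx, Quotient.sound ((hrel x a).mpr this)⟩⟩
  have hinj : Function.Injective ψ := by
    intro q1 q2 heq
    by_cases h1 : ∃ x ∈ g.support, (⟦x⟧ : QH) = q1 <;>
      by_cases h2 : ∃ x ∈ g.support, (⟦x⟧ : QH) = q2 <;>
      simp only [ψ, dif_pos, dif_neg, h1, h2] at heq
    · have := Sum.inl.inj heq
      have hx : h1.choose = h2.choose := congrArg Subtype.val this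
      rw [← h1.choose_spec.2, ← h2.choose_spec.2, hx]
    · exact absurd heq (by simp)
    · exact absurd heq (by simp)
    · have hφ : φ q1 = φ q2 := congrArg Subtype.val (Sum.inr.inj heq)
      obtain ⟨a1, rfl⟩ := Quotient.exists_rep q1
      obtain ⟨a2, rfl⟩ := Quotient.exists_rep q2
      have : a1 ∈ MulAction.orbit K a2 := (hrelK a1 a2).mp (Quotient.exact hφ)
      have : a1 ∈ MulAction.orbit H a2 := hkey a2 h2 this
      exact Quotient.sound ((hrel a1 a2).mpr this)
  -- cardinalities
  haveI : Finite QH := Quotient.finite _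
  haveI : Finite QK := Quotient.finite _
  haveI := Fintype.ofFinite QH
  haveI := Fintype.ofFinite QK
  obtain ⟨x0, hx0⟩ := hg
  have hcard1 : Fintype.card QH ≤ g.support.card +
      Fintype.card {q : QK // ∀ x ∈ g.support, (⟦x⟧ : QK) ≠ q} := by
    calc Fintype.card QH ≤ Fintype.card (↥g.support ⊕ {q : QK // ∀ x ∈ g.support, (⟦x⟧ : QK) ≠ q}) :=
          Fintype.card_le_of_injective ψ hinj
      _ = _ := by rw [Fintype.card_sum, Fintype.card_coe]
  have hcard2 : Fintype.card {q : QK // ∀ x ∈ g.support, (⟦x⟧ : QK) ≠ q} ≤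
      Fintype.card QK - 1 := by
    have hinj2 : Function.Injective
        (fun q : {q : QK // ∀ x ∈ g.support, (⟦x⟧ : QK) ≠ q} =>
          (⟨q.1, fun h => q.2 x0 hx0 h.symm⟩ : {q : QK // q ≠ ⟦x0⟧})) := by
      intro a b hab
      simp only [Subtype.mk.injEq] at hab
      exact Subtype.ext hab

    calc Fintype.card {q : QK // ∀ x ∈ g.support, (⟦x⟧ : QK) ≠ q}
        ≤ Fintype.card {q : QK // q ≠ (⟦x0⟧ : QK)} := Fintype.card_le_of_injective _ hinj2
      _ = Fintype.card QK - 1 := by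
          rw [Fintype.card_subtype_compl, Fintype.card_subtype_eq]
  have hQK1 : 1 ≤ Fintype.card QK := Fintype.card_pos_iff.mpr ⟨⟦x0⟧⟩
  have hsupp1 : 1 ≤ g.support.card := Finset.card_pos.mpr ⟨x0, hx0⟩
  have : nOrb H = Fintype.card QH := by rw [nOrb, Nat.card_eq_fintype_card]
  rw [this]
  have : nOrb K = Fintype.card QK := by rw [nOrb, Nat.card_eq_fintype_card]
  rw [this]
  omega

lemma closure_insert_closure (g : Perm α) (T : Set (Perm α)) :
    closure (insert g ((closure T : Subgroup (Perm α)) : Set (Perm α))) = closure (insert g T) := by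
  apply le_antisymm
  · rw [closure_le]
    intro x hx
    rcases hx with rfl | hx
    · exact subset_closure (Set.mem_insert _ _)
    · exact closure_mono (Set.subset_insert _ _) hx
  · rw [closure_le]
    intro x hx
    rcases hx with rfl | hx
    · exact subset_closure (Set.mem_insert _ _)
    · exact subset_closure (Set.mem_insert_of_mem _ (subset_closure hx))

lemma nOrb_bot : nOrb (⊥ : Subgroup (Perm α)) = Fintype.card α := by
  rw [nOrb]
  have h : ∀ a b : α, a ∈ MulAction.orbit (⊥ : Subgroup (Perm α)) b → a = b := by
    rintro a b ⟨⟨s, hs⟩, rfl⟩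
    rw [Subgroup.mem_bot] at hs
    subst hs
    simp
  rw [← Nat.card_eq_fintype_card]
  apply Nat.card_congr
  refine Equiv.ofBijective (Quotient.lift (fun a => a) ?_) ⟨?_, ?_⟩
  · intro a b hab
    exact h a b hab
  · intro q1 q2
    obtain ⟨a, rfl⟩ := Quotient.exists_rep q1
    obtain ⟨b, rfl⟩ := Quotient.exists_rep q2
    intro hab
    simp only [Quotient.lift_mk] at hab
    subst hab
    rfl
  · intro a
    exact ⟨⟦a⟧, rfl⟩

lemma main_lemma (T : Finset (Perm α)) :
    Fintype.card α ≤ nOrb (closure (T : Set (Perm α))) + ∑ g ∈ T, (g.support.card - 1) := by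
  classical
  induction T using Finset.induction with
  | empty => simp [Subgroup.closure_empty, nOrb_bot]
  | @insert g T hg ih =>
    rw [Finset.sum_insert hg]
    have hstep : nOrb (closure (T : Set (Perm α))) ≤
        nOrb (closure (insert g (T : Set (Perm α)))) + (g.support.card - 1) := by
      by_cases hsupp : g.support.Nonempty
      · have := step_lemma (closure (T : Set (Perm α))) g hsupp
        rwa [closure_insert_closure] at this
      · have hg1 : g = 1 := by
          rw [Finset.not_nonempty_iff_eq_empty] at hsupp
          exact Equiv.Perm.support_eq_empty_iff.mp hsupp
        subst hg1
        have : closure (insert (1 : Perm α) (T : Set (Perm α))) = closure (T : Set (Perm α)) := by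
          apply le_antisymm
          · rw [closure_le]
            intro x hx
            rcases hx with rfl | hx
            · exact one_mem _
            · exact subset_closure hx
          · exact closure_mono (Set.subset_insert _ _)
        rw [this]
        omega
    calc Fintype.card α ≤ nOrb (closure (T : Set (Perm α))) + ∑ g ∈ T, (g.support.card - 1) := ih
      _ ≤ nOrb (closure (insert g (T : Set (Perm α)))) + (g.support.card - 1)
            + ∑ g ∈ T, (g.support.card - 1) := by omega
      _ = _ := by rw [Finset.coe_insert]; omega

lemma nOrb_top [Nonempty α] : nOrb (⊤ : Subgroup (Perm α)) = 1 := by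
  rw [nOrb, Nat.card_eq_one_iff_unique]
  constructor
  · constructor
    intro q1 q2
    obtain ⟨a, rfl⟩ := Quotient.exists_rep q1
    obtain ⟨b, rfl⟩ := Quotient.exists_rep q2
    apply Quotient.sound
    show a ∈ MulAction.orbit (⊤ : Subgroup (Perm α)) b
    exact ⟨⟨Equiv.swap a b, trivial⟩, Equiv.swap_apply_right a b⟩
  · exact ⟨⟦Classical.arbitrary α⟧⟩

lemma lower_bound_general (T : Finset (Perm α)) [Nonempty α]
    (hgen : closure (T : Set (Perm α)) = ⊤) :
    Fintype.card α ≤ 1 + ∑ g ∈ T, (g.support.card - 1) := by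
  have := main_lemma T
  rwa [hgen, nOrb_top] at this


section Construction

variable {n : ℕ}

/-- embed a natural number into `Fin n` via mod -/
def emb (hpos : 0 < n) (v : ℕ) : Fin n := ⟨v % n, Nat.mod_lt v hpos⟩

lemma emb_val (hpos : 0 < n) {v : ℕ} (hv : v < n) : (emb hpos v).1 = v := Nat.mod_eq_of_lt hv

lemma emb_eq_self (hpos : 0 < n) (x : Fin n) : emb hpos x.1 = x := by
  apply Fin.ext; exact emb_val hpos x.2

lemma emb_inj (hpos : 0 < n) {v w : ℕ} (hv : v < n) (hw : w < n) :
    emb hpos v = emb hpos w ↔ v = w := by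
  constructor
  · intro h
    have := congrArg Fin.val h
    rwa [emb_val hpos hv, emb_val hpos hw] at this
  · rintro rfl; rfl

/-- the list `[a, a+1, ..., a+b-1]` as elements of `Fin n` -/
def FL (hpos : 0 < n) (a b : ℕ) : List (Fin n) := (List.range' a b).map (emb hpos)

lemma FL_length (hpos : 0 < n) (a b : ℕ) : (FL hpos a b).length = b := by
  simp [FL]

lemma FL_cons (hpos : 0 < n) (a b : ℕ) :
    FL hpos a (b+1) = emb hpos a :: FL hpos (a+1) b := by
  rw [FL, List.range'_succ, List.map_cons]; rfl

lemma FL_getElem (hpos : 0 < n) (a b i : ℕ) (h : i < (FL hpos a b).length) :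
    (FL hpos a b)[i] = emb hpos (a + i) := by
  have h' : i < b := by rwa [FL_length] at h
  simp only [FL, List.getElem_map]
  congr 1
  rw [List.getElem_range']
  omega

lemma FL_mem (hpos : 0 < n) (a b : ℕ) (x : Fin n) (hab : a + b ≤ n) :
    x ∈ FL hpos a b ↔ a ≤ x.1 ∧ x.1 < a + b := by
  simp only [FL, List.mem_map, List.mem_range']
  constructor
  · rintro ⟨v, ⟨i, hi, rfl⟩, rfl⟩
    rw [emb_val hpos (by omega)]
    omega
  · intro ⟨h1, h2⟩
    refine ⟨x.1, ⟨x.1 - a, by omega, by omega⟩, emb_eq_self hpos x⟩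

lemma FL_nodup (hpos : 0 < n) (a b : ℕ) (hab : a + b ≤ n) : (FL hpos a b).Nodup := by
  apply List.Nodup.map_on
  · intro v hv w hw h
    rw [List.mem_range'] at hv hw
    obtain ⟨i, hi, rfl⟩ := hv
    obtain ⟨j, hj, rfl⟩ := hw
    rw [emb_inj hpos (by omega) (by omega)] at h
    exact h
  · exact List.nodup_range'

end Construction

section Cyc

variable {n k : ℕ}

/-- the `k`-cycle `(a, a+1, ..., a+k-1)` -/
def cyc (hpos : 0 < n) (k a : ℕ) : Perm (Fin n) := (FL hpos a k).formPerm

variable (hpos : 0 < n)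

lemma cyc_isCycle (hk : 2 ≤ k) (a : ℕ) (hak : a + k ≤ n) : (cyc hpos k a).IsCycle := by
  apply List.isCycle_formPerm (FL_nodup hpos a k hak)
  rw [FL_length]; exact hk

lemma cyc_support (hk : 2 ≤ k) (a : ℕ) (hak : a + k ≤ n) :
    (cyc hpos k a).support = (FL hpos a k).toFinset := by
  apply List.support_formPerm_of_nodup _ (FL_nodup hpos a k hak)
  intro x hx
  have := congrArg List.length hx
  rw [FL_length] at this
  simp at this
  omega

lemma cyc_support_card (hk : 2 ≤ k) (a : ℕ) (hak : a + k ≤ n) :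
    (cyc hpos k a).support.card = k := by
  rw [cyc_support hpos hk a hak, List.toFinset_card_of_nodup (FL_nodup hpos a k hak), FL_length]

lemma cyc_pow_apply (a : ℕ) (hak : a + k ≤ n) (i d : ℕ) (hid : i + d < k) :
    ((cyc hpos k a) ^ d) (emb hpos (a + i)) = emb hpos (a + i + d) := by
  have hi : i < (FL hpos a k).length := by rw [FL_length]; omega
  have h0 := List.formPerm_pow_apply_getElem (FL hpos a k) (FL_nodup hpos a k hak) d i hi
  rw [FL_getElem hpos a k i hi] at h0
  rw [cyc, h0]
  have hlen : (FL hpos a k).length = k := FL_length hpos a k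
  have hmod : (i + d) % (FL hpos a k).length = i + d := by
    rw [hlen]; exact Nat.mod_eq_of_lt (by omega)
  rw [FL_getElem hpos a k ((i+d) % (FL hpos a k).length) (by rw [hmod, hlen]; omega)]
  rw [hmod, ← Nat.add_assoc]

lemma cyc_apply_in (a : ℕ) (hak : a + k ≤ n) (i : ℕ) (hi : i + 1 < k) :
    (cyc hpos k a) (emb hpos (a + i)) = emb hpos (a + i + 1) := by
  have := cyc_pow_apply hpos a hak i 1 hi
  rwa [pow_one] at this

lemma cyc_pow_apply_last (a : ℕ) (hak : a + k ≤ n) (j : ℕ) (hj1 : 1 ≤ j) (hjk : j ≤ k - 1) :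
    ((cyc hpos k a) ^ j) (emb hpos (a + (k - 1))) = emb hpos (a + (j - 1)) := by
  have hi : k - 1 < (FL hpos a k).length := by rw [FL_length]; omega
  have h0 := List.formPerm_pow_apply_getElem (FL hpos a k) (FL_nodup hpos a k hak) j (k-1) hi
  rw [FL_getElem hpos a k (k-1) hi] at h0
  rw [cyc, h0]
  have hlen : (FL hpos a k).length = k := FL_length hpos a k
  have hmod : (k - 1 + j) % (FL hpos a k).length = j - 1 := by
    rw [hlen]
    have : k - 1 + j = k + (j - 1) := by omega
    rw [this, Nat.add_mod_left, Nat.mod_eq_of_lt (by omega)]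
  rw [FL_getElem hpos a k ((k - 1 + j) % (FL hpos a k).length) (by rw [hmod, hlen]; omega)]
  rw [hmod]

lemma cyc_apply_last (hk : 2 ≤ k) (a : ℕ) (hak : a + k ≤ n) :
    (cyc hpos k a) (emb hpos (a + (k - 1))) = emb hpos a := by
  have := cyc_pow_apply_last hpos a hak 1 le_rfl (by omega)
  rw [pow_one] at this
  simpa using this

lemma cyc_apply_out (a : ℕ) (hak : a + k ≤ n) (v : ℕ) (hv : v < n)
    (hout : v < a ∨ a + k ≤ v) : (cyc hpos k a) (emb hpos v) = emb hpos v := by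
  apply List.formPerm_apply_of_notMem
  rw [FL_mem hpos a k _ hak, emb_val hpos hv]
  omega

lemma cyc_pow_apply_out (a : ℕ) (hak : a + k ≤ n) (v : ℕ) (hv : v < n)
    (hout : v < a ∨ a + k ≤ v) (d : ℕ) : ((cyc hpos k a) ^ d) (emb hpos v) = emb hpos v :=
  Equiv.Perm.pow_apply_eq_self_of_apply_eq_self (cyc_apply_out hpos a hak v hv hout) d

lemma cyc_pow_apply' (a : ℕ) (hak : a + k ≤ n) (v d : ℕ) (h1 : a ≤ v) (h2 : v + d < a + k) :
    ((cyc hpos k a) ^ d) (emb hpos v) = emb hpos (v + d) := by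
  have := cyc_pow_apply hpos a hak (v - a) d (by omega)
  rw [Nat.add_sub_cancel' h1] at this
  exact this

lemma cyc_apply_in' (a : ℕ) (hak : a + k ≤ n) (v : ℕ) (h1 : a ≤ v) (h2 : v + 1 < a + k) :
    (cyc hpos k a) (emb hpos v) = emb hpos (v + 1) := by
  have := cyc_pow_apply' hpos a hak v 1 h1 h2
  rwa [pow_one] at this

lemma cyc_apply_last' (hk : 2 ≤ k) (a : ℕ) (hak : a + k ≤ n) (v : ℕ) (hv : v = a + k - 1) :
    (cyc hpos k a) (emb hpos v) = emb hpos a := by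
  subst hv
  have := cyc_apply_last hpos hk a hak
  have he : a + (k - 1) = a + k - 1 := by omega
  rwa [he] at this

end Cyc

section T3

variable {β : Type*} [DecidableEq β]

/-- the 3-cycle `(a b c)` -/
def t3 (a b c : β) : Equiv.Perm β := Equiv.swap a b * Equiv.swap b c

lemma t3_conj (σ : Equiv.Perm β) (a b c : β) :
    σ * t3 a b c * σ⁻¹ = t3 (σ a) (σ b) (σ c) := by
  rw [t3, t3, Equiv.swap_apply_apply, Equiv.swap_apply_apply]
  group

lemma t3_apply_fst (a b c : β) (hab : a ≠ b) (hac : a ≠ c) : t3 a b c a = b := by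
  rw [t3, Equiv.Perm.mul_apply, Equiv.swap_apply_of_ne_of_ne hab hac, Equiv.swap_apply_left]

lemma t3_apply_snd (a b c : β) (hca : c ≠ a) (hcb : c ≠ b) : t3 a b c b = c := by
  rw [t3, Equiv.Perm.mul_apply, Equiv.swap_apply_left, Equiv.swap_apply_of_ne_of_ne hca hcb]

lemma t3_apply_thd (a b c : β) : t3 a b c c = a := by
  rw [t3, Equiv.Perm.mul_apply, Equiv.swap_apply_right, Equiv.swap_apply_right]

lemma t3_apply_other (a b c x : β) (ha : x ≠ a) (hb : x ≠ b) (hc : x ≠ c) : t3 a b c x = x := by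
  rw [t3, Equiv.Perm.mul_apply, Equiv.swap_apply_of_ne_of_ne hb hc,
    Equiv.swap_apply_of_ne_of_ne ha hb]

lemma t3_mul_t3 (a b c d : β) (hab : a ≠ b) (hac : a ≠ c) (had : a ≠ d)
    (hbc : b ≠ c) (hbd : b ≠ d) (hcd : c ≠ d) :
    t3 a b d * t3 b c d = t3 a b c := by
  ext x
  rw [Equiv.Perm.mul_apply]
  rcases eq_or_ne x a with rfl | hxa
  · rw [t3_apply_other b c d x hab hac had, t3_apply_fst x b d hab had,
      t3_apply_fst x b c hab hac]
  rcases eq_or_ne x b with rfl | hxb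
  · rw [t3_apply_fst x c d hbc hbd, t3_apply_other a x d c hac.symm hbc.symm hcd,
      t3_apply_snd a x c hac.symm hbc.symm]
  rcases eq_or_ne x c with rfl | hxc
  · rw [t3_apply_snd b x d hbd.symm hcd.symm, t3_apply_thd a b d, t3_apply_thd a b x]
  rcases eq_or_ne x d with rfl | hxd
  · rw [t3_apply_thd b c x, t3_apply_snd a b x had.symm hbd.symm,
      t3_apply_other a b c x had.symm hbd.symm hcd.symm]
  · rw [t3_apply_other b c d x hxb hxc hxd, t3_apply_other a b d x hxa hxb hxd,
      t3_apply_other a b c x hxa hxb hxc]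

end T3

section Base

variable {n k : ℕ}

lemma comm_key (hpos : 0 < n) (hk : 2 ≤ k) (hn : 2 * k - 1 ≤ n) :
    cyc hpos k 0 * cyc hpos k (k-1) =
      t3 (emb hpos (k-1)) (emb hpos 0) (emb hpos k) * (cyc hpos k (k-1) * cyc hpos k 0) := by
  have h0k : 0 + k ≤ n := by omega
  have h1k : (k-1) + k ≤ n := by omega
  have hkn : k < n := by omega
  have hne : ∀ p q : ℕ, p < n → q < n → p ≠ q → emb hpos p ≠ emb hpos q :=
    fun p q hp hq hpq h => hpq ((emb_inj hpos hp hq).mp h)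
  ext x
  obtain ⟨v, hv⟩ := x
  have hx : (⟨v, hv⟩ : Fin n) = emb hpos v := (emb_eq_self hpos ⟨v, hv⟩).symm
  rw [hx]
  simp only [Equiv.Perm.mul_apply]
  by_cases ha : v + 2 < k
  · rw [cyc_apply_out hpos (k-1) h1k v hv (Or.inl (by omega)),
      cyc_apply_in' hpos 0 h0k v (by omega) (by omega),
      cyc_apply_out hpos (k-1) h1k (v+1) (by omega) (Or.inl (by omega)),
      t3_apply_other _ _ _ _ (hne _ _ (by omega) (by omega) (by omega))
        (hne _ _ (by omega) (by omega) (by omega)) (hne _ _ (by omega) hkn (by omega))]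
  by_cases hb : v + 2 = k
  · have hv1 : v + 1 = k - 1 := by omega
    rw [cyc_apply_out hpos (k-1) h1k v hv (Or.inl (by omega)),
      cyc_apply_in' hpos 0 h0k v (by omega) (by omega), hv1,
      cyc_apply_in' hpos (k-1) h1k (k-1) le_rfl (by omega)]
    have hk1 : k - 1 + 1 = k := by omega
    rw [hk1, t3_apply_thd]
  by_cases hc : v = k - 1
  · subst hc
    rw [cyc_apply_in' hpos (k-1) h1k (k-1) le_rfl (by omega)]
    have hk1 : k - 1 + 1 = k := by omega
    rw [hk1, cyc_apply_out hpos 0 h0k k hkn (Or.inr (by omega)),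
      cyc_apply_last' hpos hk 0 h0k (k-1) (by omega),
      cyc_apply_out hpos (k-1) h1k 0 (by omega) (Or.inl (by omega)),
      t3_apply_snd _ _ _ (hne _ _ hkn (by omega) (by omega)) (hne _ _ hkn (by omega) (by omega))]
  by_cases hd : v < 2*k - 2
  · have hkv : k ≤ v := by omega
    rw [cyc_apply_in' hpos (k-1) h1k v (by omega) (by omega),
      cyc_apply_out hpos 0 h0k (v+1) (by omega) (Or.inr (by omega)),
      cyc_apply_out hpos 0 h0k v hv (Or.inr (by omega)),
      cyc_apply_in' hpos (k-1) h1k v (by omega) (by omega),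
      t3_apply_other _ _ _ _ (hne _ _ (by omega) (by omega) (by omega))
        (hne _ _ (by omega) (by omega) (by omega)) (hne _ _ (by omega) hkn (by omega))]
  by_cases he : v = 2*k - 2
  · subst he
    rw [cyc_apply_last' hpos hk (k-1) h1k (2*k-2) (by omega),
      cyc_apply_last' hpos hk 0 h0k (k-1) (by omega),
      cyc_apply_out hpos 0 h0k (2*k-2) hv (Or.inr (by omega)),
      cyc_apply_last' hpos hk (k-1) h1k (2*k-2) (by omega),
      t3_apply_fst _ _ _ (hne _ _ (by omega) (by omega) (by omega))
        (hne _ _ (by omega) hkn (by omega))]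
  · rw [cyc_apply_out hpos (k-1) h1k v hv (Or.inr (by omega)),
      cyc_apply_out hpos 0 h0k v hv (Or.inr (by omega)),
      cyc_apply_out hpos (k-1) h1k v hv (Or.inr (by omega)),
      t3_apply_other _ _ _ _ (hne _ _ hv (by omega) (by omega))
        (hne _ _ hv (by omega) (by omega)) (hne _ _ hv hkn (by omega))]

end Base

section BaseMem

variable {n k : ℕ} (hpos : 0 < n) (hk : 2 ≤ k) (hn : 2 * k - 1 ≤ n)
variable (G : Subgroup (Equiv.Perm (Fin n)))
variable (hc0 : cyc hpos k 0 ∈ G) (hc1 : cyc hpos k (k-1) ∈ G)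

include hk hn hc0 hc1

lemma tt_mem : t3 (emb hpos (k-1)) (emb hpos 0) (emb hpos k) ∈ G := by
  have h := comm_key hpos hk hn
  have : t3 (emb hpos (k-1)) (emb hpos 0) (emb hpos k) =
      (cyc hpos k 0 * cyc hpos k (k-1)) * (cyc hpos k (k-1) * cyc hpos k 0)⁻¹ := by
    rw [h]; group
  rw [this]
  exact G.mul_mem (G.mul_mem hc0 hc1) (G.inv_mem (G.mul_mem hc1 hc0))

lemma u_mem (j : ℕ) (hj1 : 1 ≤ j) (hjk : j ≤ k - 1) :
    t3 (emb hpos (j-1)) (emb hpos j) (emb hpos k) ∈ G := by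
  have h0k : 0 + k ≤ n := by omega
  have htt := tt_mem hpos hk hn G hc0 hc1
  have hconj := t3_conj ((cyc hpos k 0)^j) (emb hpos (k-1)) (emb hpos 0) (emb hpos k)
  have e1 : ((cyc hpos k 0)^j) (emb hpos (k-1)) = emb hpos (j-1) := by
    have := cyc_pow_apply_last hpos 0 h0k j hj1 hjk
    simpa using this
  have e2 : ((cyc hpos k 0)^j) (emb hpos 0) = emb hpos j := by
    have := cyc_pow_apply' hpos 0 h0k 0 j (le_refl 0) (by omega)
    simpa using this
  have e3 : ((cyc hpos k 0)^j) (emb hpos k) = emb hpos k := by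
    exact cyc_pow_apply_out hpos 0 h0k k (by omega) (Or.inr (by omega)) j
  rw [e1, e2, e3] at hconj
  rw [← hconj]
  exact G.mul_mem (G.mul_mem (G.pow_mem hc0 j) htt) (G.inv_mem (G.pow_mem hc0 j))

lemma w_mem (a : ℕ) (ha1 : 1 ≤ a) (hak : a + 2 ≤ k - 1) :
    t3 (emb hpos a) (emb hpos (a+1)) (emb hpos (a+2)) ∈ G := by
  have hkn : k < n := by omega
  have hne : ∀ p q : ℕ, p < n → q < n → p ≠ q → emb hpos p ≠ emb hpos q :=
    fun p q hp hq hpq h => hpq ((emb_inj hpos hp hq).mp h)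
  have h1 := u_mem hpos hk hn G hc0 hc1 (a+1) (by omega) (by omega)
  have h2 := u_mem hpos hk hn G hc0 hc1 (a+2) (by omega) (by omega)
  have e1 : a + 1 - 1 = a := by omega
  have e2 : a + 2 - 1 = a + 1 := by omega
  rw [e1] at h1
  rw [e2] at h2
  have := t3_mul_t3 (emb hpos a) (emb hpos (a+1)) (emb hpos (a+2)) (emb hpos k)
    (hne _ _ (by omega) (by omega) (by omega)) (hne _ _ (by omega) (by omega) (by omega))
    (hne _ _ (by omega) hkn (by omega)) (hne _ _ (by omega) (by omega) (by omega))
    (hne _ _ (by omega) hkn (by omega)) (hne _ _ (by omega) hkn (by omega))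
  rw [← this]
  exact G.mul_mem h1 h2

lemma tail_mem (hkeven : Even k) :
    ∀ d, 2 * d ≤ k - 1 → (FL hpos (k-1-2*d) (2*d+1)).formPerm ∈ G := by
  intro d
  induction d with
  | zero =>
    intro _
    have : FL hpos (k-1-2*0) (2*0+1) = [emb hpos (k-1)] := by
      norm_num [FL_cons]
      simp [FL]
    rw [this, List.formPerm_singleton]
    exact G.one_mem
  | succ d ih =>
    intro hd
    obtain ⟨t, rfl⟩ := hkeven
    set a := t + t - 1 - 2*(d+1) with ha
    have ha1 : 1 ≤ a := by omega
    have e1 : 2*(d+1)+1 = ((2*d+1)+1)+1 := by ring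
    have e2 : FL hpos a (2*(d+1)+1) =
        emb hpos a :: emb hpos (a+1) :: FL hpos (a+2) (2*d+1) := by
      rw [e1, FL_cons, FL_cons]
    have e3 : (FL hpos a (2*(d+1)+1)).formPerm =
        t3 (emb hpos a) (emb hpos (a+1)) (emb hpos (a+2)) * (FL hpos (a+2) (2*d+1)).formPerm := by
      rw [e2, List.formPerm_cons_cons]
      have e4 : FL hpos (a+2) (2*d+1) = emb hpos (a+2) :: FL hpos (a+3) (2*d) := by
        rw [FL_cons]
      rw [e4, List.formPerm_cons_cons, ← e4, t3, mul_assoc]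
    have e5 : a + 2 = t + t - 1 - 2*d := by omega
    have hwm := w_mem hpos hk hn G hc0 hc1 a ha1 (by omega)
    have hih := ih (by omega)
    rw [← e5] at hih
    rw [e3]
    exact G.mul_mem hwm hih

lemma swap01_mem (hkeven : Even k) : Equiv.swap (emb hpos 0) (emb hpos 1) ∈ G := by
  obtain ⟨t, ht⟩ := hkeven
  have e1 : FL hpos 0 k = emb hpos 0 :: emb hpos 1 :: FL hpos 2 (k-2) := by
    have h : k = ((k-2)+1)+1 := by omega
    conv_lhs => rw [h, FL_cons, FL_cons]
  have e2 : emb hpos 1 :: FL hpos 2 (k-2) = FL hpos 1 (k-1) := by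
    have h : k - 1 = (k-2)+1 := by omega
    conv_rhs => rw [h, FL_cons]
  have e3 : cyc hpos k 0 = Equiv.swap (emb hpos 0) (emb hpos 1) * (FL hpos 1 (k-1)).formPerm := by
    rw [cyc, e1, List.formPerm_cons_cons, e2]
  have htail : (FL hpos 1 (k-1)).formPerm ∈ G := by
    have := tail_mem hpos hk hn G hc0 hc1 ⟨t, ht⟩ ((k-2)/2) (by omega)
    have e4 : k - 1 - 2*((k-2)/2) = 1 := by omega
    have e5 : 2*((k-2)/2)+1 = k - 1 := by omega
    rw [e4, e5] at this
    exact this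
  have : Equiv.swap (emb hpos 0) (emb hpos 1) = cyc hpos k 0 * ((FL hpos 1 (k-1)).formPerm)⁻¹ := by
    rw [e3]; group
  rw [this]
  exact G.mul_mem hc0 (G.inv_mem htail)

end BaseMem

section Main

open Finset

lemma construction (k n : ℕ) (hk : 2 ≤ k) (hkeven : Even k) (hn : 2 * k - 1 ≤ n) :
    ∃ T : Finset (Equiv.Perm (Fin n)),
      (∀ g ∈ T, g.IsCycle ∧ g.support.card = k) ∧
      Subgroup.closure (T : Set (Equiv.Perm (Fin n))) = ⊤ ∧
      T.card = (n - 1) ⌈/⌉ (k - 1) := by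
  have hpos : 0 < n := by omega
  have hk1 : 0 < k - 1 := by omega
  set m := (n - 1) ⌈/⌉ (k - 1) with hm
  have hmlb : n - 1 ≤ m * (k - 1) := by
    have := le_smul_ceilDiv (b := n - 1) hk1
    simpa [smul_eq_mul, mul_comm] using this
  have hm1 : 1 ≤ m := by
    by_contra h
    have : m = 0 := by omega
    rw [this] at hmlb
    omega
  have hmub : (m - 1) * (k - 1) < n - 1 := by
    by_contra h
    push_neg at h
    have : m ≤ m - 1 := by
      rw [hm]
      rw [ceilDiv_le_iff_le_smul hk1]
      simpa [smul_eq_mul, mul_comm] using h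
    omega
  have hm2 : 2 ≤ m := by
    by_contra h
    have : m = 1 := by omega
    rw [this] at hmlb
    omega
  set s : ℕ → ℕ := fun i => if i = m - 1 then n - k else i * (k - 1) with hs
  have hs_def : ∀ i, s i = if i = m - 1 then n - k else i * (k - 1) := fun i => rfl
  have hmul : ∀ i, (i + 1) * (k - 1) = i * (k - 1) + (k - 1) := fun i => by rw [Nat.succ_mul]
  have hmm : m * (k - 1) = (m - 1) * (k - 1) + (k - 1) := by
    conv_lhs => rw [show m = (m - 1) + 1 by omega]
    rw [Nat.succ_mul]
  have hs_bound : ∀ i, i < m → s i + k ≤ n := by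
    intro i hi
    rw [hs_def i]
    by_cases h : i = m - 1
    · rw [if_pos h]; omega
    · rw [if_neg h]
      have h1 : i + 1 ≤ m - 1 := by omega
      have h2 : (i + 1) * (k-1) ≤ (m - 1) * (k-1) := Nat.mul_le_mul_right _ h1
      have h3 := hmul i
      omega
  have hs0 : s 0 = 0 := by
    rw [hs_def 0, if_neg (by omega)]; ring
  have hs1 : s 1 = k - 1 := by
    rw [hs_def 1]
    by_cases h : 1 = m - 1
    · rw [if_pos h]
      have hm2' : m = 2 := by omega
      rw [hm2'] at hmlb hmub
      have : (2 - 1) * (k - 1) = k - 1 := by norm_num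
      rw [this] at hmub
      have : 2 * (k - 1) = (k-1) + (k-1) := by ring
      rw [this] at hmlb
      omega
    · rw [if_neg h]; ring
  have hs_lb : ∀ i, 1 ≤ i → i < m → 1 ≤ s i := by
    intro i h1 hi
    rw [hs_def i]
    by_cases h : i = m - 1
    · rw [if_pos h]; omega
    · rw [if_neg h]
      have := Nat.mul_le_mul (show 1 ≤ i by omega) (show 1 ≤ k - 1 by omega)
      omega
  have hs_succ : ∀ i, i + 1 < m → s (i + 1) ≤ s i + (k - 1) := by
    intro i hi
    have hsi : s i = i * (k-1) := by rw [hs_def i, if_neg (by omega)]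
    rw [hs_def (i+1)]
    by_cases h : i + 1 = m - 1
    · rw [if_pos h]
      have h4 : (m-1) * (k-1) = (i+1)*(k-1) := by rw [h]
      have h5 := hmul i
      omega
    · rw [if_neg h]
      have h5 := hmul i
      omega
  have hlast : s (m - 1) + (k - 1) = n - 1 := by
    rw [hs_def (m-1), if_pos rfl]; omega
  have hs_mono : ∀ i j, i < j → j < m → s i < s j := by
    intro i j hij hj
    have hsi : s i = i * (k-1) := by rw [hs_def i, if_neg (by omega)]
    rw [hs_def j, hsi]
    by_cases h : j = m - 1
    · rw [if_pos h]
      have h1 : i + 1 ≤ m - 1 := by omega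
      have h2 : (i + 1) * (k-1) ≤ (m - 1) * (k-1) := Nat.mul_le_mul_right _ h1
      have h3 := hmul i
      omega
    · rw [if_neg h]
      exact (Nat.mul_lt_mul_right hk1).mpr hij
  -- the generating set
  set T : Finset (Equiv.Perm (Fin n)) := (Finset.range m).image (fun i => cyc hpos k (s i))
    with hT
  have hcyc_ne : ∀ i j, i < j → j < m → cyc hpos k (s i) ≠ cyc hpos k (s j) := by
    intro i j hij hj h
    have hsij := hs_mono i j hij hj
    have hbi := hs_bound i (by omega)
    have hbj := hs_bound j hj
    have h1 : cyc hpos k (s i) (emb hpos (s i)) = emb hpos (s i + 1) :=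
      cyc_apply_in' hpos (s i) hbi (s i) le_rfl (by omega)
    have h2 : cyc hpos k (s j) (emb hpos (s i)) = emb hpos (s i) :=
      cyc_apply_out hpos (s j) hbj (s i) (by omega) (Or.inl hsij)
    rw [h] at h1
    rw [h2] at h1
    have := (emb_inj hpos (by omega) (by omega)).mp h1
    omega
  have hcard : T.card = m := by
    rw [hT, Finset.card_image_of_injOn, Finset.card_range]
    intro i hi j hj hij
    simp only [Finset.coe_range, Set.mem_Iio] at hi hj
    by_contra h
    rcases Nat.lt_or_ge i j with h' | h'
    · exact hcyc_ne i j h' hj hij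
    · exact hcyc_ne j i (by omega) hi hij.symm
  have hmemT : ∀ i, i < m → cyc hpos k (s i) ∈ T := by
    intro i hi
    rw [hT]
    exact Finset.mem_image_of_mem _ (Finset.mem_range.mpr hi)
  refine ⟨T, ?_, ?_, hcard⟩
  · intro g hg
    rw [hT, Finset.mem_image] at hg
    obtain ⟨i, hi, rfl⟩ := hg
    rw [Finset.mem_range] at hi
    exact ⟨cyc_isCycle hpos hk (s i) (hs_bound i hi),
      cyc_support_card hpos hk (s i) (hs_bound i hi)⟩
  -- closure is everything
  set G := Subgroup.closure (T : Set (Equiv.Perm (Fin n))) with hG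
  have hC : ∀ i, i < m → cyc hpos k (s i) ∈ G := fun i hi =>
    Subgroup.subset_closure (hmemT i hi)
  have hc0 : cyc hpos k 0 ∈ G := by have := hC 0 (by omega); rwa [hs0] at this
  have hc1 : cyc hpos k (k - 1) ∈ G := by have := hC 1 hm2; rwa [hs1] at this
  have h0k : 0 + k ≤ n := by omega
  have hne : ∀ p q : ℕ, p < n → q < n → p ≠ q → emb hpos p ≠ emb hpos q :=
    fun p q hp hq hpq h => hpq ((emb_inj hpos hp hq).mp h)
  -- adjacent swaps within the first cycle
  have hsw01 : Equiv.swap (emb hpos 0) (emb hpos 1) ∈ G :=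
    swap01_mem hpos hk hn G hc0 hc1 hkeven
  have hadj : ∀ j, j + 1 ≤ k - 1 → Equiv.swap (emb hpos j) (emb hpos (j+1)) ∈ G := by
    intro j hj
    have e1 : ((cyc hpos k 0)^j) (emb hpos 0) = emb hpos j := by
      have := cyc_pow_apply' hpos 0 h0k 0 j (le_refl 0) (by omega)
      simpa using this
    have e2 : ((cyc hpos k 0)^j) (emb hpos 1) = emb hpos (j+1) := by
      have := cyc_pow_apply' hpos 0 h0k 1 j (by omega) (by omega)
      rw [Nat.add_comm 1 j] at this
      exact this
    have := Equiv.swap_apply_apply ((cyc hpos k 0)^j) (emb hpos 0) (emb hpos 1)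
    rw [e1, e2] at this
    rw [this]
    exact G.mul_mem (G.mul_mem (G.pow_mem hc0 j) hsw01) (G.inv_mem (G.pow_mem hc0 j))
  have hsw0 : ∀ v, 1 ≤ v → v ≤ k - 1 → Equiv.swap (emb hpos 0) (emb hpos v) ∈ G := by
    intro v
    induction v with
    | zero => intro h; omega
    | succ v ih =>
      intro _ hv
      by_cases hv0 : v = 0
      · subst hv0; exact hsw01
      · exact SubmonoidClass.swap_mem_trans G (ih (by omega) (by omega)) (hadj v (by omega))
  -- extend along the chain
  have hchain : ∀ i, i < m → ∀ v, 1 ≤ v → v ≤ s i + (k - 1) →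
      Equiv.swap (emb hpos 0) (emb hpos v) ∈ G := by
    intro i
    induction i with
    | zero =>
      intro _ v h1 h2
      rw [hs0] at h2
      exact hsw0 v h1 (by omega)
    | succ i ih =>
      intro hi v h1 h2
      by_cases hv : v ≤ s i + (k - 1)
      · exact ih (by omega) v h1 hv
      · push_neg at hv
        set a := s (i + 1) with ha
        have haub : a ≤ s i + (k - 1) := hs_succ i hi
        have halb : 1 ≤ a := hs_lb (i+1) (by omega) hi
        have hbk : a + k ≤ n := hs_bound (i+1) hi
        have hd1 : a + 1 ≤ v := by omega
        have hd2 : v ≤ a + (k - 1) := by omega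
        set d := v - a with hd
        have e1 : ((cyc hpos k a)^d) (emb hpos 0) = emb hpos 0 :=
          cyc_pow_apply_out hpos a hbk 0 (by omega) (Or.inl (by omega)) d
        have e2 : ((cyc hpos k a)^d) (emb hpos a) = emb hpos v := by
          have := cyc_pow_apply' hpos a hbk a d le_rfl (by omega)
          rw [show a + d = v by omega] at this
          exact this
        have hsa : Equiv.swap (emb hpos 0) (emb hpos a) ∈ G := ih (by omega) a halb haub
        have := Equiv.swap_apply_apply ((cyc hpos k a)^d) (emb hpos 0) (emb hpos a)
        rw [e1, e2] at this
        rw [this]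
        have hCa : cyc hpos k a ∈ G := hC (i+1) hi
        exact G.mul_mem (G.mul_mem (G.pow_mem hCa d) hsa) (G.inv_mem (G.pow_mem hCa d))
  have hallsw : ∀ v, 1 ≤ v → v ≤ n - 1 → Equiv.swap (emb hpos 0) (emb hpos v) ∈ G := by
    intro v h1 h2
    exact hchain (m-1) (by omega) v h1 (by rw [hlast]; omega)
  -- conclude
  rw [eq_top_iff, ← Equiv.Perm.closure_isSwap, Subgroup.closure_le]
  intro σ hσ
  obtain ⟨x, y, hxy, rfl⟩ := hσ
  have hx := x.2
  have hy := y.2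
  have hx' : x = emb hpos x.1 := (emb_eq_self hpos x).symm
  have hy' : y = emb hpos y.1 := (emb_eq_self hpos y).symm
  have hxyv : x.1 ≠ y.1 := fun h => hxy (Fin.ext h)
  by_cases hx0 : x.1 = 0
  · rw [hx', hy', hx0]
    exact hallsw y.1 (by omega) (by omega)
  by_cases hy0 : y.1 = 0
  · rw [hx', hy', hy0, Equiv.swap_comm]
    exact hallsw x.1 (by omega) (by omega)
  · rw [hx', hy']
    refine SubmonoidClass.swap_mem_trans (b := emb hpos 0) G ?_ ?_
    · rw [Equiv.swap_comm]
      exact hallsw x.1 (by omega) (by omega)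
    · exact hallsw y.1 (by omega) (by omega)

end Main


/-- For even `k ≥ 2` and `n ≥ 2k−1`, the minimum cardinality of a
set of `k`-cycles generating `S_n` is exactly `⌈(n−1)/(k−1)⌉` (here `⌈/⌉` is
ceiling division on ℕ). -/
theorem stmt_6 (k n : ℕ) (hk : 2 ≤ k) (hkeven : Even k) (hn : 2 * k - 1 ≤ n) :
    IsLeast {c : ℕ | ∃ T : Finset (Equiv.Perm (Fin n)),
        (∀ g ∈ T, g.IsCycle ∧ g.support.card = k) ∧
        Subgroup.closure (T : Set (Equiv.Perm (Fin n))) = ⊤ ∧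
        T.card = c} ((n - 1) ⌈/⌉ (k - 1)) := by
  constructor
  · exact construction k n hk hkeven hn
  · rintro c ⟨T, hprop, hgen, rfl⟩
    have hpos : 0 < n := by omega
    haveI : Nonempty (Fin n) := ⟨⟨0, hpos⟩⟩
    have hlow := lower_bound_general T hgen
    rw [Fintype.card_fin] at hlow
    have hsum : ∑ g ∈ T, (g.support.card - 1) = T.card * (k - 1) := by
      rw [Finset.sum_congr rfl (fun g hg => by rw [(hprop g hg).2]), Finset.sum_const,
        smul_eq_mul]
    rw [hsum] at hlow
    have hk1 : 0 < k - 1 := by omega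
    rw [ceilDiv_le_iff_le_smul hk1, smul_eq_mul]
    calc n - 1 ≤ T.card * (k - 1) := by omega
      _ = (k - 1) * T.card := mul_comm _ _
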